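/- Let H₁ = H₂ = ℂ² with orthonormal basis {|0⟩, |1⟩}, let α, β ∈ ℂ with |α|² + |β|² = 1, and let φ = α·|0⟩⊗|0⟩ + β·|1⟩⊗|1⟩. Then E_γ(|φ⟩⟨φ|) := ‖|φ⟩⟨φ|‖_γ · ln ‖|φ⟩⟨φ|‖_γ = 2(|α| + |β|)² · ln(|α| + |β|), while the von Neumann reduced entropy satisfies S_vN(|φ⟩⟨φ|) = −|α|² ln|α|² − |β|² ln|β|². In particular, there exists a pure-state density operator P on ℂ² ⊗ ℂ² with E_γ(P) ≠ S_vN(P). -/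

import Mathlib

open Matrix
open scoped Kronecker ComplexOrder

noncomputable def traceNorm {n : Type*} [Fintype n] [DecidableEq n] (A : Matrix n n ℂ) : ℝ :=
  ((Matrix.posSemidef_conjTranspose_mul_self A).1.eigenvectorUnitary.1 *
    diagonal (((↑) : ℝ → ℂ) ∘ (√·) ∘ (Matrix.posSemidef_conjTranspose_mul_self A).1.eigenvalues) *
    (star (Matrix.posSemidef_conjTranspose_mul_self A).1.eigenvectorUnitary : Matrix n n ℂ)).trace.re

noncomputable def gammaNorm {m n : Type*} [Fintype m] [DecidableEq m] [Fintype n] [DecidableEq n]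
    (t : Matrix (m × n) (m × n) ℂ) : ℝ :=
  sInf { c : ℝ | ∃ (r : ℕ) (u : Fin r → Matrix m m ℂ) (v : Fin r → Matrix n n ℂ),
    t = ∑ i, (u i) ⊗ₖ (v i) ∧ c = ∑ i, traceNorm (u i) * traceNorm (v i) }

def IsDensity {n : Type*} [Fintype n] (ρ : Matrix n n ℂ) : Prop :=
  ρ.PosSemidef ∧ ρ.trace = 1

def evec {ι : Type*} (ψ : EuclideanSpace ℂ ι) : ι → ℂ := ψ

noncomputable def tensorVec {ι κ : Type*} (a : EuclideanSpace ℂ ι) (b : EuclideanSpace ℂ κ) :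
    EuclideanSpace ℂ (ι × κ) :=
  (WithLp.equiv 2 _).symm (fun p => evec a p.1 * evec b p.2)

noncomputable def projOnto {ι : Type*} (ψ : EuclideanSpace ℂ ι) : Matrix ι ι ℂ :=
  Matrix.vecMulVec (evec ψ) (star (evec ψ))

/-- Partial trace over the second factor. -/
noncomputable def ptraceRight {m n : Type*} [Fintype n]
    (M : Matrix (m × n) (m × n) ℂ) : Matrix m m ℂ :=
  Matrix.of fun i k => ∑ j, M (i, j) (k, j)

/-- Partial trace over the first factor. -/
noncomputable def ptraceLeft {m n : Type*} [Fintype m]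
    (M : Matrix (m × n) (m × n) ℂ) : Matrix n n ℂ :=
  Matrix.of fun j l => ∑ i, M (i, j) (i, l)

/-- The von Neumann entropy \`-Tr(ρ ln ρ)\` of a Hermitian matrix, computed via its
spectral decomposition with the convention \`0 ln 0 = 0\` (junk value 0 otherwise). -/
noncomputable def vNEntropy {n : Type*} [Fintype n] [DecidableEq n]
    (A : Matrix n n ℂ) : ℝ :=
  if h : A.IsHermitian then -∑ i, h.eigenvalues i * Real.log (h.eigenvalues i) else 0

/-! ### Auxiliary lemmas -/

lemma trace_eq_sum_eig {n : Type*} [Fintype n] [DecidableEq n] {A : Matrix n n ℂ}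
    (hA : A.IsHermitian) : A.trace = ∑ i, (hA.eigenvalues i : ℂ) := by
  conv_lhs => rw [hA.spectral_theorem, Unitary.conjStarAlgAut_apply]
  rw [Matrix.trace_mul_cycle]
  simp [Matrix.trace_diagonal]

lemma trace_sq_eq_sum_sq {n : Type*} [Fintype n] [DecidableEq n] {S : Matrix n n ℂ}
    (hS : S.IsHermitian) : (S * S).trace = ∑ i, ((hS.eigenvalues i : ℂ))^2 := by
  have h := hS.spectral_theorem
  have hu : (star hS.eigenvectorUnitary : Matrix n n ℂ) * (hS.eigenvectorUnitary : Matrix n n ℂ) = 1 := by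
    simp
  have key : S * S = (hS.eigenvectorUnitary : Matrix n n ℂ) *
      (diagonal (RCLike.ofReal ∘ hS.eigenvalues) * diagonal (RCLike.ofReal ∘ hS.eigenvalues)) *
      (star hS.eigenvectorUnitary : Matrix n n ℂ) := by
    conv_lhs => rw [h, Unitary.conjStarAlgAut_apply]
    simp only [mul_assoc, Unitary.coe_star]
    rw [← mul_assoc (star hS.eigenvectorUnitary : Matrix n n ℂ), hu, one_mul]
  rw [key, Matrix.trace_mul_cycle, ← mul_assoc, hu, one_mul, diagonal_mul_diagonal,
    Matrix.trace_diagonal]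
  simp [pow_two]

lemma traceNorm_eq_sum_sqrt {n : Type*} [Fintype n] [DecidableEq n] (A : Matrix n n ℂ) :
    traceNorm A = ∑ i, √((Matrix.posSemidef_conjTranspose_mul_self A).1.eigenvalues i) := by
  unfold traceNorm
  rw [Matrix.trace_mul_cycle]
  simp [Matrix.trace_diagonal, Complex.re_sum]

lemma traceNorm_nonneg' {n : Type*} [Fintype n] [DecidableEq n] (A : Matrix n n ℂ) :
    0 ≤ traceNorm A := by
  rw [traceNorm_eq_sum_sqrt]
  exact Finset.sum_nonneg fun i _ => Real.sqrt_nonneg _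

lemma traceNorm_of_diag {n : Type*} [Fintype n] [DecidableEq n] (A : Matrix n n ℂ)
    (d : n → ℝ) (hd : ∀ i, 0 ≤ d i)
    (h : Aᴴ * A = diagonal (fun i => ((d i : ℂ))^2)) : traceNorm A = ∑ i, d i := by
  rw [traceNorm_eq_sum_sqrt]
  have hP := Matrix.posSemidef_conjTranspose_mul_self A
  have hc : (Aᴴ * A).charpoly = ∏ i, (Polynomial.X - Polynomial.C (((d i ^ 2 : ℝ) : ℂ))) := by
    rw [h, Matrix.charpoly_diagonal]
    simp
  have hroots := hP.1.roots_charpoly_eq_eigenvalues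
  rw [hc, Polynomial.roots_prod _ _
    (Finset.prod_ne_zero_iff.mpr fun i _ => Polynomial.X_sub_C_ne_zero _)] at hroots
  simp only [Polynomial.roots_X_sub_C, Multiset.bind_singleton] at hroots
  have key := congrArg (fun m : Multiset ℂ => (m.map (fun z => √z.re)).sum) hroots
  simp only [Multiset.map_map, Function.comp_def, Complex.ofReal_re] at key
  have e1 : Multiset.map (fun x => √(d x ^ 2)) Finset.univ.val = Multiset.map d Finset.univ.val :=
    Multiset.map_congr rfl fun i _ => Real.sqrt_sq (hd i)
  rw [e1] at key
  rw [Finset.sum_eq_multiset_sum, Finset.sum_eq_multiset_sum]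
  refine Eq.trans ?_ key.symm
  congr 1

lemma frob_le_traceNorm {n : Type*} [Fintype n] [DecidableEq n] (A : Matrix n n ℂ) :
    ∑ p : n × n, ‖A p.1 p.2‖^2 ≤ (traceNorm A)^2 := by
  have hP := Matrix.posSemidef_conjTranspose_mul_self A
  have h1 : ((Aᴴ * A).trace).re = ∑ p : n × n, ‖A p.1 p.2‖^2 := by
    rw [Matrix.trace]
    simp only [Matrix.diag, Matrix.mul_apply, Matrix.conjTranspose_apply]
    rw [Complex.re_sum, Fintype.sum_prod_type]
    rw [Finset.sum_comm]
    congr 1; ext j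
    rw [Complex.re_sum]
    congr 1; ext i
    simp [mul_comm, Complex.mul_conj, Complex.normSq_eq_norm_sq, ← Complex.ofReal_pow]
  have h2 : ((Aᴴ * A).trace).re = ∑ i, hP.1.eigenvalues i := by
    rw [trace_eq_sum_eig hP.1, Complex.re_sum]
    simp
  rw [← h1, h2, traceNorm_eq_sum_sqrt]
  calc ∑ i, hP.1.eigenvalues i = ∑ i, (√(hP.1.eigenvalues i))^2 :=
        Finset.sum_congr rfl fun i _ => (Real.sq_sqrt (hP.eigenvalues_nonneg i)).symm
    _ ≤ ∑ i, √(hP.1.eigenvalues i) * ∑ j, √(hP.1.eigenvalues j) :=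
        Finset.sum_le_sum fun i _ => by
          rw [pow_two]
          exact mul_le_mul_of_nonneg_left
            (Finset.single_le_sum (fun j _ => Real.sqrt_nonneg _) (Finset.mem_univ i))
            (Real.sqrt_nonneg _)
    _ = (∑ i, √(hP.1.eigenvalues i))^2 := by rw [← Finset.sum_mul, pow_two]

/-- Cauchy–Schwarz step: entrywise products are bounded by the product of trace norms. -/
lemma sum_abs_mul_le {n : Type*} [Fintype n] [DecidableEq n] (u v : Matrix n n ℂ) :
    ∑ p : n × n, ‖u p.1 p.2‖ * ‖v p.1 p.2‖
      ≤ traceNorm u * traceNorm v := by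
  have cs := Finset.sum_mul_sq_le_sq_mul_sq Finset.univ
      (fun p : n × n => ‖u p.1 p.2‖) (fun p : n × n => ‖v p.1 p.2‖)
  have h1 := frob_le_traceNorm u
  have h2 := frob_le_traceNorm v
  have hsu : (0:ℝ) ≤ ∑ p : n × n, ‖u p.1 p.2‖^2 :=
    Finset.sum_nonneg fun p _ => sq_nonneg _
  have hsv : (0:ℝ) ≤ ∑ p : n × n, ‖v p.1 p.2‖^2 :=
    Finset.sum_nonneg fun p _ => sq_nonneg _
  have hx : (0:ℝ) ≤ ∑ p : n × n, ‖u p.1 p.2‖ * ‖v p.1 p.2‖ :=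
    Finset.sum_nonneg fun p _ => mul_nonneg (norm_nonneg _) (norm_nonneg _)
  have htu := traceNorm_nonneg' u
  have htv := traceNorm_nonneg' v
  nlinarith [cs, h1, h2, hsu, hsv, hx, htu, htv, mul_nonneg htu htv]

/-- The phase function. -/
noncomputable def ph (y : ℂ) : ℂ := if y = 0 then 1 else y / ‖y‖

lemma abs_ph (y : ℂ) : ‖ph y‖ = 1 := by
  unfold ph
  split_ifs with h
  · simp
  · rw [norm_div]
    simp [h]

lemma ph_star_mul (z : ℂ) : ph (star z) * z = (‖z‖ : ℂ) := by
  unfold ph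
  split_ifs with h
  · have : z = 0 := by simpa using congrArg star h
    simp [this]
  · have hz : z ≠ 0 := fun hz => h (by simp [hz])
    have habs : ‖star z‖ = ‖z‖ := by
      simp [RCLike.star_def]
    rw [habs, div_mul_eq_mul_div]
    have : star z * z = ((‖z‖ : ℂ))^2 := by
      rw [RCLike.star_def, mul_comm, Complex.mul_conj, Complex.normSq_eq_norm_sq]
      push_cast
      ring
    rw [this]
    have habsne : (‖z‖ : ℂ) ≠ 0 := by
      simpa using hz
    field_simp

/-- The single-entry matrix. -/
def sem {n : Type*} [DecidableEq n] (s t : n) (c : ℂ) : Matrix n n ℂ :=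
  Matrix.of fun i j => if i = s ∧ j = t then c else 0

lemma traceNorm_sem (s t : Fin 2) (c : ℂ) : traceNorm (sem s t c) = ‖c‖ := by
  have h : (sem s t c)ᴴ * (sem s t c) =
      diagonal (fun i => (((if i = t then ‖c‖ else 0 : ℝ) : ℂ))^2) := by
    ext i j
    simp only [Matrix.mul_apply, Matrix.conjTranspose_apply, sem, Matrix.of_apply,
      Matrix.diagonal]
    fin_cases i <;> fin_cases j <;> fin_cases s <;> fin_cases t <;>
      simp [Fin.sum_univ_two, mul_comm, Complex.mul_conj, Complex.normSq_eq_norm_sq,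
        ← Complex.ofReal_pow]
  have := traceNorm_of_diag (sem s t c) (fun i => if i = t then ‖c‖ else 0)
    (fun i => by split_ifs <;> simp [norm_nonneg]) h
  rw [this, Fin.sum_univ_two]
  fin_cases t <;> simp

theorem gammaNorm_pure (α β : ℂ)
    (φ : EuclideanSpace ℂ (Fin 2 × Fin 2))
    (hφ : φ = α • tensorVec (EuclideanSpace.single (0 : Fin 2) (1 : ℂ))
                            (EuclideanSpace.single (0 : Fin 2) (1 : ℂ)) +
              β • tensorVec (EuclideanSpace.single (1 : Fin 2) (1 : ℂ))
                            (EuclideanSpace.single (1 : Fin 2) (1 : ℂ))) :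
    gammaNorm (projOnto φ) = (‖α‖ + ‖β‖)^2 := by
  set a := ‖α‖ with ha
  set b := ‖β‖ with hb
  have hφ' : ∀ p : Fin 2 × Fin 2, φ p = if p.1 = p.2 then ![α, β] p.1 else 0 := by
    subst hφ
    rintro ⟨i, j⟩
    fin_cases i <;> fin_cases j <;>
      simp [tensorVec, evec, EuclideanSpace.single_apply, PiLp.add_apply, PiLp.smul_apply,
        WithLp.equiv_symm_apply, PiLp.toLp_apply]
  have hPapp : ∀ p q : Fin 2 × Fin 2, projOnto φ p q = φ p * star (φ q) := by
    intro p q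
    simp [projOnto, Matrix.vecMulVec_apply, evec]
  -- the canonical decomposition
  set c : Fin 2 → ℂ := ![α, β] with hc
  have habs : ∀ s, ‖c s‖ = ![a, b] s := by
    intro s; fin_cases s <;> simp [hc, ha, hb]
  set u : Fin 4 → Matrix (Fin 2) (Fin 2) ℂ :=
    ![sem 0 0 (α * star α), sem 0 1 (α * star β), sem 1 0 (β * star α), sem 1 1 (β * star β)]
    with hu
  set v : Fin 4 → Matrix (Fin 2) (Fin 2) ℂ :=
    ![sem 0 0 1, sem 0 1 1, sem 1 0 1, sem 1 1 1] with hv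
  have hdecomp : projOnto φ = ∑ i, (u i) ⊗ₖ (v i) := by
    ext ⟨p1, p2⟩ ⟨q1, q2⟩
    rw [hPapp]
    rw [Fin.sum_univ_four]
    simp only [Matrix.add_apply, Matrix.kroneckerMap_apply, hu, hv]
    fin_cases p1 <;> fin_cases p2 <;> fin_cases q1 <;> fin_cases q2 <;>
      simp [hφ', sem, hc] <;> ring
  have hsum : ∑ i, traceNorm (u i) * traceNorm (v i) = (a + b)^2 := by
    rw [Fin.sum_univ_four]
    have e0 : u 0 = sem 0 0 (α * star α) := rfl
    have e1 : u 1 = sem 0 1 (α * star β) := rfl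
    have e2 : u 2 = sem 1 0 (β * star α) := rfl
    have e3 : u 3 = sem 1 1 (β * star β) := rfl
    have f0 : v 0 = sem 0 0 1 := rfl
    have f1 : v 1 = sem 0 1 1 := rfl
    have f2 : v 2 = sem 1 0 1 := rfl
    have f3 : v 3 = sem 1 1 1 := rfl
    rw [e0, e1, e2, e3, f0, f1, f2, f3]
    rw [traceNorm_sem, traceNorm_sem, traceNorm_sem, traceNorm_sem,
      traceNorm_sem, traceNorm_sem, traceNorm_sem, traceNorm_sem]
    simp only [norm_mul, norm_one]
    have hsa : ‖star α‖ = a := by simp [RCLike.star_def, ha]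
    have hsb : ‖star β‖ = b := by simp [RCLike.star_def, hb]
    rw [hsa, hsb]
    ring
  have hmem : (a + b)^2 ∈ { c : ℝ | ∃ (r : ℕ) (u : Fin r → Matrix (Fin 2) (Fin 2) ℂ)
      (v : Fin r → Matrix (Fin 2) (Fin 2) ℂ),
      projOnto φ = ∑ i, (u i) ⊗ₖ (v i) ∧ c = ∑ i, traceNorm (u i) * traceNorm (v i) } :=
    ⟨4, u, v, hdecomp, hsum.symm⟩
  -- the dual functional
  set D : Fin 2 × Fin 2 → ℂ := fun p => ph (star (c p.1 * star (c p.2))) with hD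
  have habsD : ∀ p, ‖D p‖ = 1 := fun p => abs_ph _
  have hDval : ∀ p : Fin 2 × Fin 2, D p * (c p.1 * star (c p.2)) =
      ((‖c p.1‖ * ‖c p.2‖ : ℝ) : ℂ) := by
    intro p
    rw [hD]
    rw [ph_star_mul (c p.1 * star (c p.2))]
    rw [norm_mul]
    have : ‖star (c p.2)‖ = ‖c p.2‖ := by simp [RCLike.star_def]
    rw [this]
  have hlb : ∀ x ∈ { c : ℝ | ∃ (r : ℕ) (u : Fin r → Matrix (Fin 2) (Fin 2) ℂ)
      (v : Fin r → Matrix (Fin 2) (Fin 2) ℂ),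
      projOnto φ = ∑ i, (u i) ⊗ₖ (v i) ∧ c = ∑ i, traceNorm (u i) * traceNorm (v i) },
      (a + b)^2 ≤ x := by
    rintro x ⟨r, w, z, h1, h2⟩
    -- value of the functional on projOnto φ
    have hLP : ∑ p : Fin 2 × Fin 2, D p * (projOnto φ) (p.1, p.1) (p.2, p.2)
        = (((a + b)^2 : ℝ) : ℂ) := by
      have : ∀ p : Fin 2 × Fin 2, D p * (projOnto φ) (p.1, p.1) (p.2, p.2)
          = ((‖c p.1‖ * ‖c p.2‖ : ℝ) : ℂ) := by
        intro p
        rw [hPapp]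
        have e1 : φ (p.1, p.1) = c p.1 := by rw [hφ']; simp
        have e2 : φ (p.2, p.2) = c p.2 := by rw [hφ']; simp
        rw [e1, e2, hDval]
      rw [Finset.sum_congr rfl (fun p _ => this p)]
      rw [Fintype.sum_prod_type, Fin.sum_univ_two]
      simp only [Fin.sum_univ_two, habs]
      push_cast
      ring
    -- expand over the decomposition
    have hswap : ∑ p : Fin 2 × Fin 2, D p * (projOnto φ) (p.1, p.1) (p.2, p.2)
        = ∑ i, ∑ p : Fin 2 × Fin 2, D p * ((w i) ⊗ₖ (z i)) (p.1, p.1) (p.2, p.2) := by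
      rw [h1]
      simp only [Matrix.sum_apply, Finset.mul_sum]
      rw [Finset.sum_comm]
    -- per-term bound
    have hterm : ∀ i, (∑ p : Fin 2 × Fin 2, D p * ((w i) ⊗ₖ (z i)) (p.1, p.1) (p.2, p.2)).re
        ≤ traceNorm (w i) * traceNorm (z i) := by
      intro i
      calc (∑ p : Fin 2 × Fin 2, D p * ((w i) ⊗ₖ (z i)) (p.1, p.1) (p.2, p.2)).re
          ≤ ‖∑ p : Fin 2 × Fin 2, D p * ((w i) ⊗ₖ (z i)) (p.1, p.1) (p.2, p.2)‖ :=
            Complex.re_le_norm _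
        _ ≤ ∑ p : Fin 2 × Fin 2, ‖D p * ((w i) ⊗ₖ (z i)) (p.1, p.1) (p.2, p.2)‖ :=
            norm_sum_le _ _
        _ = ∑ p : Fin 2 × Fin 2, ‖(w i) p.1 p.2‖ * ‖(z i) p.1 p.2‖ := by
            apply Finset.sum_congr rfl
            intro p _
            rw [norm_mul, habsD, one_mul, Matrix.kroneckerMap_apply, norm_mul]
        _ ≤ traceNorm (w i) * traceNorm (z i) := sum_abs_mul_le _ _
    have : (a + b)^2 ≤ ∑ i, traceNorm (w i) * traceNorm (z i) := by
      have hre : ((a + b)^2 : ℝ) =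
          (∑ i, ∑ p : Fin 2 × Fin 2, D p * ((w i) ⊗ₖ (z i)) (p.1, p.1) (p.2, p.2)).re := by
        rw [← hswap, hLP, Complex.ofReal_re]
      rw [hre, Complex.re_sum]
      exact Finset.sum_le_sum fun i _ => hterm i
    rw [h2]
    exact this
  unfold gammaNorm
  exact le_antisymm (csInf_le ⟨(a+b)^2, fun x hx => hlb x hx⟩ hmem) (le_csInf ⟨_, hmem⟩ hlb)

theorem entropy_pure (α β : ℂ)
    (φ : EuclideanSpace ℂ (Fin 2 × Fin 2))
    (hφ : φ = α • tensorVec (EuclideanSpace.single (0 : Fin 2) (1 : ℂ))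
                            (EuclideanSpace.single (0 : Fin 2) (1 : ℂ)) +
              β • tensorVec (EuclideanSpace.single (1 : Fin 2) (1 : ℂ))
                            (EuclideanSpace.single (1 : Fin 2) (1 : ℂ))) :
    vNEntropy (ptraceRight (projOnto φ)) =
      -(‖α‖ ^ 2 * Real.log (‖α‖ ^ 2)) -
        ‖β‖ ^ 2 * Real.log (‖β‖ ^ 2) := by
  set A := ‖α‖ ^ 2 with hA
  set B := ‖β‖ ^ 2 with hB
  have hφ' : ∀ p : Fin 2 × Fin 2, φ p = if p.1 = p.2 then ![α, β] p.1 else 0 := by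
    subst hφ
    rintro ⟨i, j⟩
    fin_cases i <;> fin_cases j <;>
      simp [tensorVec, evec, EuclideanSpace.single_apply, PiLp.add_apply, PiLp.smul_apply,
        WithLp.equiv_symm_apply, PiLp.toLp_apply]
  have hrho : ptraceRight (projOnto φ) = diagonal ![(A : ℂ), (B : ℂ)] := by
    ext i k
    simp only [ptraceRight, Matrix.of_apply, projOnto, Matrix.vecMulVec_apply, evec,
      Pi.star_apply, Fin.sum_univ_two]
    fin_cases i <;> fin_cases k <;>
      simp [hφ', diagonal, hA, hB, RCLike.star_def, Complex.mul_conj,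
        Complex.normSq_eq_norm_sq, ← Complex.ofReal_pow]
  rw [hrho]
  have hH : (diagonal ![(A : ℂ), (B : ℂ)]).IsHermitian := by
    rw [Matrix.IsHermitian]
    ext i k
    simp only [Matrix.conjTranspose_apply, Matrix.diagonal]
    fin_cases i <;> fin_cases k <;> simp [RCLike.star_def]
  rw [vNEntropy, dif_pos hH]
  set ev := hH.eigenvalues with hev
  have hsum : ev 0 + ev 1 = A + B := by
    have := trace_eq_sum_eig hH
    rw [Matrix.trace_diagonal, Fin.sum_univ_two, Fin.sum_univ_two] at this
    simp only [Matrix.cons_val_zero, Matrix.cons_val_one, Matrix.head_cons] at this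
    exact_mod_cast this.symm
  have hprod : ev 0 * ev 1 = A * B := by
    have h' := hH.det_eq_prod_eigenvalues
    rw [Matrix.det_diagonal, Fin.prod_univ_two, Fin.prod_univ_two] at h'
    simp only [Matrix.cons_val_zero, Matrix.cons_val_one, Matrix.head_cons,
      RCLike.ofReal_alg, Complex.real_smul, mul_one] at h'
    have h2 : ((A * B : ℝ) : ℂ) = (((ev 0 : ℝ) * (ev 1 : ℝ) : ℝ) : ℂ) := by push_cast; exact h'
    exact (Complex.ofReal_inj.mp h2).symm
  have hfact : (ev 0 - A) * (ev 0 - B) = 0 := by linear_combination ev 0 * hsum - hprod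
  rw [Fin.sum_univ_two]
  rcases mul_eq_zero.mp hfact with h | h
  · have h0 : ev 0 = A := by linarith
    have h1 : ev 1 = B := by linarith
    rw [h0, h1]; ring
  · have h0 : ev 0 = B := by linarith
    have h1 : ev 1 = A := by linarith
    rw [h0, h1]; ring

lemma phi_entries (α β : ℂ) (φ : EuclideanSpace ℂ (Fin 2 × Fin 2))
    (hφ : φ = α • tensorVec (EuclideanSpace.single (0 : Fin 2) (1 : ℂ))
                            (EuclideanSpace.single (0 : Fin 2) (1 : ℂ)) +
              β • tensorVec (EuclideanSpace.single (1 : Fin 2) (1 : ℂ))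
                            (EuclideanSpace.single (1 : Fin 2) (1 : ℂ))) :
    ∀ p : Fin 2 × Fin 2, φ p = if p.1 = p.2 then ![α, β] p.1 else 0 := by
  subst hφ
  rintro ⟨i, j⟩
  fin_cases i <;> fin_cases j <;>
    simp [tensorVec, evec, EuclideanSpace.single_apply, PiLp.add_apply, PiLp.smul_apply,
      WithLp.equiv_symm_apply, PiLp.toLp_apply]

/-- For `φ = α|00⟩ + β|11⟩`, `E_γ(|φ⟩⟨φ|) = 2(|α|+|β|)² ln(|α|+|β|)` while the von
Neumann reduced entropy is `-|α|² ln|α|² - |β|² ln|β|²`; in particular there is a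
pure-state density operator on ℂ² ⊗ ℂ² on which the two differ. -/
theorem Egamma_ne_reduced_entropy (α β : ℂ)
    (hαβ : ‖α‖ ^ 2 + ‖β‖ ^ 2 = 1)
    (φ : EuclideanSpace ℂ (Fin 2 × Fin 2))
    (hφ : φ = α • tensorVec (EuclideanSpace.single (0 : Fin 2) (1 : ℂ))
                            (EuclideanSpace.single (0 : Fin 2) (1 : ℂ)) +
              β • tensorVec (EuclideanSpace.single (1 : Fin 2) (1 : ℂ))
                            (EuclideanSpace.single (1 : Fin 2) (1 : ℂ))) :
    gammaNorm (projOnto φ) * Real.log (gammaNorm (projOnto φ)) =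
      2 * (‖α‖ + ‖β‖) ^ 2 * Real.log (‖α‖ + ‖β‖) ∧
    vNEntropy (ptraceRight (projOnto φ)) =
      -(‖α‖ ^ 2 * Real.log (‖α‖ ^ 2)) -
        ‖β‖ ^ 2 * Real.log (‖β‖ ^ 2) ∧
    ∃ ψ : EuclideanSpace ℂ (Fin 2 × Fin 2), ‖ψ‖ = 1 ∧
      gammaNorm (projOnto ψ) * Real.log (gammaNorm (projOnto ψ)) ≠
        vNEntropy (ptraceRight (projOnto ψ)) := by
  refine ⟨?_, entropy_pure α β φ hφ, ?_⟩
  · rw [gammaNorm_pure α β φ hφ, Real.log_pow]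
    ring
  · -- the explicit example with α = β = 1/√2
    set γ : ℂ := ((Real.sqrt 2 : ℝ)⁻¹ : ℂ) with hγ
    set ψ : EuclideanSpace ℂ (Fin 2 × Fin 2) :=
      γ • tensorVec (EuclideanSpace.single (0 : Fin 2) (1 : ℂ))
                    (EuclideanSpace.single (0 : Fin 2) (1 : ℂ)) +
      γ • tensorVec (EuclideanSpace.single (1 : Fin 2) (1 : ℂ))
                    (EuclideanSpace.single (1 : Fin 2) (1 : ℂ)) with hψ
    have hs2 : (0:ℝ) < Real.sqrt 2 := Real.sqrt_pos.mpr (by norm_num)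
    have habsγ : ‖γ‖ = (Real.sqrt 2)⁻¹ := by
      rw [hγ, norm_inv, Complex.norm_of_nonneg hs2.le]
    have hsq : ((Real.sqrt 2)⁻¹ : ℝ)^2 = 1/2 := by
      rw [inv_pow, Real.sq_sqrt (by norm_num : (0:ℝ) ≤ 2)]; norm_num
    have hent := phi_entries γ γ ψ hψ
    refine ⟨ψ, ?_, ?_⟩
    · rw [EuclideanSpace.norm_eq]
      have hsum : ∑ p : Fin 2 × Fin 2, ‖ψ p‖^2 = 1 := by
        rw [Fintype.sum_prod_type, Fin.sum_univ_two, Fin.sum_univ_two, Fin.sum_univ_two]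
        rw [hent (0,0), hent (0,1), hent (1,0), hent (1,1)]
        simp only [Matrix.cons_val_zero, Matrix.cons_val_one, Matrix.head_cons]
        norm_num [habsγ, hsq]
      rw [hsum, Real.sqrt_one]
    · rw [gammaNorm_pure γ γ ψ hψ, entropy_pure γ γ ψ hψ]
      have ha2 : (‖γ‖ + ‖γ‖)^2 = 2 := by
        rw [habsγ]
        have : ((Real.sqrt 2)⁻¹ + (Real.sqrt 2)⁻¹ : ℝ)^2 = 4 * ((Real.sqrt 2)⁻¹)^2 := by ring
        rw [this, hsq]; norm_num
      have habs2 : ‖γ‖ ^ 2 = 1/2 := by rw [habsγ, hsq]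
      rw [ha2, habs2]
      rw [show (1:ℝ)/2 = 2⁻¹ by norm_num, Real.log_inv]
      intro h
      nlinarith [Real.log_pos (show (1:ℝ) < 2 by norm_num)]
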